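/- Let d > 1 be real. For every integer k ≥ 1 and every a ∈ A: (1 − d^{−k})·α ≤ λ^{(k)}_a ≤ (1 − d^{−k})·β; equivalently, for every π ∈ Γ_A, F_k(π, (P*^{(0)},…,P*^{(k−1)}); 1/d, E) = (λ^{(k)})^T π lies in [(1 − d^{−k})α, (1 − d^{−k})β]. -/

import Mathlib

open Filter Topology

/-- Assumption (A): `E` has nonnegative entries with all column sums and row sums positive. -/
def AssumptionA {A : Type*} [Fintype A] (E : Matrix A A ℝ) : Prop :=
  (∀ a b, 0 ≤ E a b) ∧ (∀ b, 0 < ∑ a, E a b) ∧ (∀ a, 0 < ∑ b, E a b)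

/-- A probability vector indexed by the alphabet `A`. -/
def IsProbVec {A : Type*} [Fintype A] (π : A → ℝ) : Prop :=
  (∀ a, 0 ≤ π a) ∧ ∑ a, π a = 1

/-- A column-stochastic matrix: nonnegative entries, each column sums to `1`. -/
def IsColStochastic {A : Type*} [Fintype A] (P : Matrix A A ℝ) : Prop :=
  (∀ a b, 0 ≤ P a b) ∧ ∀ b, ∑ a, P a b = 1

/-- The Kullback–Leibler divergence vector `D_KL(Q‖M)_b = Σ_a Q_{a,b} log(Q_{a,b}/M_{a,b})`
(the convention `0 · log(0/0) = 0` is automatic). -/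
noncomputable def DKL {A : Type*} [Fintype A] (Q M : Matrix A A ℝ) : A → ℝ :=
  fun b => ∑ a, Q a b * Real.log (Q a b / M a b)

/-- The vectors `λ^{(i)}`: `λ^{(0)} = 0` and
`λ^{(i)}_a = ((d−1)/d^i) log Σ_b e^{(d^i/(d−1)) λ^{(i−1)}_b} E_{b,a}` (the summands with
`E_{b,a} = 0` vanish, so the sum may be taken over all of `A`). -/
noncomputable def lam {A : Type*} [Fintype A] (E : Matrix A A ℝ) (d : ℝ) : ℕ → A → ℝ
  | 0 => fun _ => 0
  | i + 1 => fun a =>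
      ((d - 1) / d ^ (i + 1)) *
        Real.log (∑ b, Real.exp (d ^ (i + 1) / (d - 1) * lam E d i b) * E b a)

/-- The optimal transition matrices `P*^{(i)}`. -/
noncomputable def Pstar {A : Type*} [Fintype A] (E : Matrix A A ℝ) (d : ℝ) (i : ℕ) :
    Matrix A A ℝ :=
  fun a b =>
    if 0 < E a b then
      Real.exp (d ^ (i + 1) / (d - 1) * lam E d i a) * E a b /
        ∑ c, Real.exp (d ^ (i + 1) / (d - 1) * lam E d i c) * E c b
    else 0

/-- The ordered product `P^{(j)} P^{(j+1)} ⋯ P^{(k−1)}`. -/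
noncomputable def matListProd {A : Type*} [Fintype A] [DecidableEq A]
    (P : ℕ → Matrix A A ℝ) (j k : ℕ) : Matrix A A ℝ :=
  ((List.range' j (k - j)).map P).prod

/-- The objective function
`F_k(π,P;1/d,E) = −Σ_{j=0}^{k−1} ((d−1)/d^{j+1}) D_KL(P^{(j)}‖E)^T (P^{(j+1)}⋯P^{(k−1)}) π`
(only `P 0, …, P (k−1)` are used). -/
noncomputable def Fk {A : Type*} [Fintype A] [DecidableEq A] (E : Matrix A A ℝ) (d : ℝ)
    (k : ℕ) (π : A → ℝ) (P : ℕ → Matrix A A ℝ) : ℝ :=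
  -∑ j ∈ Finset.range k, ((d - 1) / d ^ (j + 1)) *
      ∑ b, DKL (P j) E b * (matListProd P (j + 1) k).mulVec π b

/-- `P^{(k)}(d,E)`: the maximum of `F_k` over the feasible domain. -/
noncomputable def Pk {A : Type*} [Fintype A] [DecidableEq A] (E : Matrix A A ℝ)
    (d : ℝ) (k : ℕ) : ℝ :=
  sSup {x : ℝ | ∃ π P, IsProbVec π ∧ (∀ j < k, IsColStochastic (P j)) ∧
    (∀ j < k, ∀ a b, E a b = 0 → P j a b = 0) ∧ x = Fk E d k π P}

/-- `α = log min_b Σ_a E_{a,b}`. -/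
noncomputable def alp {A : Type*} [Fintype A] (E : Matrix A A ℝ) : ℝ :=
  Real.log (sInf {x : ℝ | ∃ b, x = ∑ a, E a b})

/-- `β = log max_b Σ_a E_{a,b}`. -/
noncomputable def bet {A : Type*} [Fintype A] (E : Matrix A A ℝ) : ℝ :=
  Real.log (sSup {x : ℝ | ∃ b, x = ∑ a, E a b})

/-- `γ = log min{E_{a,b} : E_{a,b} > 0}`. -/
noncomputable def gam {A : Type*} [Fintype A] (E : Matrix A A ℝ) : ℝ :=
  Real.log (sInf {x : ℝ | 0 < x ∧ ∃ a b, E a b = x})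

/-- `A_∞`: the symbols lying on a cycle, i.e. `a` with `(E^n)_{a,a} > 0` for some `n ≥ 1`. -/
def AinfSet {A : Type*} [Fintype A] [DecidableEq A] (E : Matrix A A ℝ) : Set A :=
  {a | ∃ n : ℕ, 1 ≤ n ∧ 0 < (E ^ n) a a}

/-- `L`: the least `n ≥ 1` with `(E^n)_{a,a} > 0` for all `a ∈ A_∞`. -/
noncomputable def Lconst {A : Type*} [Fintype A] [DecidableEq A] (E : Matrix A A ℝ) : ℕ :=
  sInf {n : ℕ | 1 ≤ n ∧ ∀ a ∈ AinfSet E, 0 < (E ^ n) a a}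


section Aux14

variable {A : Type*} [Fintype A] [DecidableEq A] [Nonempty A]
variable {E : Matrix A A ℝ} {d : ℝ}

lemma colsum_bounds14 (hE : AssumptionA E) (a : A) :
    Real.exp (alp E) ≤ ∑ b, E b a ∧ ∑ b, E b a ≤ Real.exp (bet E) := by
  set S : Set ℝ := {x : ℝ | ∃ b, x = ∑ a, E a b} with hS
  have hfin : S.Finite := by
    have : S = Set.range (fun b => ∑ a, E a b) := by
      ext x; simp [hS, Set.range, eq_comm]
    rw [this]; exact Set.finite_range _
  have hne : S.Nonempty := ⟨_, Classical.arbitrary A, rfl⟩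
  have hmemS : (a : A) → (∑ b, E b a) ∈ S := fun a => ⟨a, rfl⟩
  obtain ⟨b₀, hb₀⟩ := hne.csInf_mem hfin
  obtain ⟨b₁, hb₁⟩ := hne.csSup_mem hfin
  have hinf_pos : 0 < sInf S := by rw [hb₀]; exact hE.2.1 b₀
  have hsup_pos : 0 < sSup S := by rw [hb₁]; exact hE.2.1 b₁
  constructor
  · rw [alp, Real.exp_log hinf_pos]
    exact csInf_le hfin.bddBelow (hmemS a)
  · rw [bet, Real.exp_log hsup_pos]
    exact le_csSup hfin.bddAbove (hmemS a)

lemma lam_bounds14 (hE : AssumptionA E) (hd : 1 < d) :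
    ∀ k, ∀ a : A, (1 - (d ^ k)⁻¹) * alp E ≤ lam E d k a ∧
      lam E d k a ≤ (1 - (d ^ k)⁻¹) * bet E := by
  have hd0 : (0:ℝ) < d := lt_trans one_pos hd
  have hd1 : (0:ℝ) < d - 1 := by linarith
  intro k
  induction k with
  | zero => intro a; simp [lam]
  | succ i ih =>
    intro a
    have hdp : (0:ℝ) < d ^ (i + 1) := pow_pos hd0 _
    set t : ℝ := d ^ (i + 1) / (d - 1) with ht
    have htpos : 0 < t := div_pos hdp hd1
    set c : ℝ := (d - 1) / d ^ (i + 1) with hc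
    have hcpos : 0 < c := div_pos hd1 hdp
    have hct : c * t = 1 := by
      rw [hc, ht]; field_simp
    have hcol := colsum_bounds14 hE a
    set L : ℝ := (1 - (d ^ i)⁻¹) * alp E with hL
    set U : ℝ := (1 - (d ^ i)⁻¹) * bet E with hU
    have hlow : Real.exp (t * L + alp E) ≤ ∑ b, Real.exp (t * lam E d i b) * E b a := by
      calc Real.exp (t * L + alp E) = Real.exp (t * L) * Real.exp (alp E) := Real.exp_add _ _
        _ ≤ Real.exp (t * L) * ∑ b, E b a :=
            mul_le_mul_of_nonneg_left hcol.1 (Real.exp_nonneg _)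
        _ = ∑ b, Real.exp (t * L) * E b a := Finset.mul_sum _ _ _
        _ ≤ ∑ b, Real.exp (t * lam E d i b) * E b a := by
            refine Finset.sum_le_sum fun b _ => ?_
            refine mul_le_mul_of_nonneg_right ?_ (hE.1 b a)
            exact Real.exp_le_exp.mpr (mul_le_mul_of_nonneg_left (ih b).1 htpos.le)
    have hhigh : ∑ b, Real.exp (t * lam E d i b) * E b a ≤ Real.exp (t * U + bet E) := by
      calc ∑ b, Real.exp (t * lam E d i b) * E b a
          ≤ ∑ b, Real.exp (t * U) * E b a := by
            refine Finset.sum_le_sum fun b _ => ?_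
            refine mul_le_mul_of_nonneg_right ?_ (hE.1 b a)
            exact Real.exp_le_exp.mpr (mul_le_mul_of_nonneg_left (ih b).2 htpos.le)
        _ = Real.exp (t * U) * ∑ b, E b a := (Finset.mul_sum _ _ _).symm
        _ ≤ Real.exp (t * U) * Real.exp (bet E) :=
            mul_le_mul_of_nonneg_left hcol.2 (Real.exp_nonneg _)
        _ = Real.exp (t * U + bet E) := (Real.exp_add _ _).symm
    have hlam : lam E d (i + 1) a
        = c * Real.log (∑ b, Real.exp (t * lam E d i b) * E b a) := by
      simp [lam, hc, ht]
    have hlog_low : t * L + alp E ≤ Real.log (∑ b, Real.exp (t * lam E d i b) * E b a) := by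
      have := Real.log_le_log (Real.exp_pos _) hlow
      rwa [Real.log_exp] at this
    have hlog_high : Real.log (∑ b, Real.exp (t * lam E d i b) * E b a) ≤ t * U + bet E := by
      have h0 : (0:ℝ) < ∑ b, Real.exp (t * lam E d i b) * E b a :=
        lt_of_lt_of_le (Real.exp_pos _) hlow
      have := Real.log_le_log h0 hhigh
      rwa [Real.log_exp] at this
    have hcoefL : c * (t * L + alp E) = (1 - (d ^ (i + 1))⁻¹) * alp E := by
      rw [hL, hc, ht]
      have h1 : (d:ℝ) ^ i ≠ 0 := (pow_pos hd0 i).ne'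
      have h2 : (d:ℝ) ^ (i+1) ≠ 0 := hdp.ne'
      field_simp
      ring
    have hcoefU : c * (t * U + bet E) = (1 - (d ^ (i + 1))⁻¹) * bet E := by
      rw [hU, hc, ht]
      have h1 : (d:ℝ) ^ i ≠ 0 := (pow_pos hd0 i).ne'
      have h2 : (d:ℝ) ^ (i+1) ≠ 0 := hdp.ne'
      field_simp
      ring
    constructor
    · rw [hlam, ← hcoefL]
      exact mul_le_mul_of_nonneg_left hlog_low hcpos.le
    · rw [hlam, ← hcoefU]
      exact mul_le_mul_of_nonneg_left hlog_high hcpos.le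

lemma Zpos14 (hE : AssumptionA E) (j : ℕ) (b : A) :
    0 < ∑ c, Real.exp (d ^ (j + 1) / (d - 1) * lam E d j c) * E c b := by
  obtain ⟨c, hc⟩ : ∃ c, 0 < E c b := by
    by_contra h
    push_neg at h
    have h0 : ∑ a, E a b = 0 :=
      Finset.sum_eq_zero fun a _ => le_antisymm (h a) (hE.1 a b)
    have := hE.2.1 b
    rw [h0] at this
    exact lt_irrefl 0 this
  refine Finset.sum_pos' (fun c _ => mul_nonneg (Real.exp_nonneg _) (hE.1 c b)) ?_
  exact ⟨c, Finset.mem_univ c, mul_pos (Real.exp_pos _) hc⟩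

lemma Pstar_eq14 (hE : AssumptionA E) (j : ℕ) (a b : A) :
    Pstar E d j a b = Real.exp (d ^ (j + 1) / (d - 1) * lam E d j a) * E a b /
      ∑ c, Real.exp (d ^ (j + 1) / (d - 1) * lam E d j c) * E c b := by
  unfold Pstar
  split_ifs with h
  · rfl
  · have h0 : E a b = 0 := le_antisymm (not_lt.mp h) (hE.1 a b)
    rw [h0]
    simp

lemma Pstar_colsum14 (hE : AssumptionA E) (j : ℕ) (b : A) :
    ∑ a, Pstar E d j a b = 1 := by
  have hZ := Zpos14 (d := d) hE j b
  simp_rw [Pstar_eq14 hE]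
  rw [← Finset.sum_div, div_self hZ.ne']

lemma DKL_Pstar14 (hE : AssumptionA E) (hd : 1 < d) (j : ℕ) (b : A) :
    ((d - 1) / d ^ (j + 1)) * DKL (Pstar E d j) E b
      = (∑ a, Pstar E d j a b * lam E d j a) - lam E d (j + 1) b := by
  have hd0 : (0:ℝ) < d := lt_trans one_pos hd
  have hd1 : (0:ℝ) < d - 1 := by linarith
  have hdp : (0:ℝ) < d ^ (j + 1) := pow_pos hd0 _
  set t : ℝ := d ^ (j + 1) / (d - 1) with ht
  set Z : ℝ := ∑ c, Real.exp (t * lam E d j c) * E c b with hZdef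
  have hZ : 0 < Z := Zpos14 hE j b
  have hterm : ∀ a, Pstar E d j a b * Real.log (Pstar E d j a b / E a b)
      = Pstar E d j a b * (t * lam E d j a - Real.log Z) := by
    intro a
    by_cases hab : 0 < E a b
    · have h1 : Pstar E d j a b / E a b = Real.exp (t * lam E d j a) / Z := by
        rw [Pstar_eq14 hE, ← hZdef]
        field_simp
        rw [ht]; congr 1; ring
      rw [h1, Real.log_div (Real.exp_ne_zero _) hZ.ne', Real.log_exp]
    · have h0 : Pstar E d j a b = 0 := by unfold Pstar; rw [if_neg hab]
      rw [h0]
      simp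
  have hDKL : DKL (Pstar E d j) E b
      = t * (∑ a, Pstar E d j a b * lam E d j a) - Real.log Z := by
    unfold DKL
    rw [Finset.sum_congr rfl fun a _ => hterm a]
    have : ∀ a : A, Pstar E d j a b * (t * lam E d j a - Real.log Z)
        = t * (Pstar E d j a b * lam E d j a) - Real.log Z * Pstar E d j a b := by
      intro a; ring
    rw [Finset.sum_congr rfl fun a _ => this a, Finset.sum_sub_distrib,
      ← Finset.mul_sum, ← Finset.mul_sum, Pstar_colsum14 hE, mul_one]
  have hlog : Real.log Z = t * lam E d (j + 1) b := by
    have hlam : lam E d (j + 1) b = ((d - 1) / d ^ (j + 1)) * Real.log Z := by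
      simp [lam, hZdef, ht]
    rw [hlam, ht]
    field_simp
  rw [hDKL, hlog, ht]
  field_simp

lemma Fk_eq14 (hE : AssumptionA E) (hd : 1 < d) (k : ℕ) (π : A → ℝ) :
    Fk E d k π (fun i => Pstar E d i) = ∑ a, lam E d k a * π a := by
  set P : ℕ → Matrix A A ℝ := fun i => Pstar E d i with hP
  set v : ℕ → A → ℝ := fun j => (matListProd P j k).mulVec π with hv
  have hsplit : ∀ j, j < k → matListProd P j k = P j * matListProd P (j + 1) k := by
    intro j hj
    have h : k - j = (k - (j + 1)) + 1 := by omega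
    rw [matListProd, h, List.range'_succ]
    simp [matListProd]
  have hterm : ∀ j, j < k →
      ((d - 1) / d ^ (j + 1)) * ∑ b, DKL (P j) E b * v (j + 1) b
        = (∑ a, lam E d j a * v j a) - ∑ b, lam E d (j + 1) b * v (j + 1) b := by
    intro j hj
    have hPv : (P j).mulVec (v (j + 1)) = v j := by
      rw [hv]
      simp only
      rw [Matrix.mulVec_mulVec, ← hsplit j hj]
    have h1 : ∀ b, ((d - 1) / d ^ (j + 1)) * (DKL (P j) E b * v (j + 1) b)
        = (∑ a, P j a b * lam E d j a) * v (j + 1) b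
          - lam E d (j + 1) b * v (j + 1) b := by
      intro b
      rw [← mul_assoc, DKL_Pstar14 hE hd j b]
      ring
    rw [Finset.mul_sum, Finset.sum_congr rfl fun b _ => h1 b, Finset.sum_sub_distrib]
    congr 1
    calc ∑ b, (∑ a, P j a b * lam E d j a) * v (j + 1) b
        = ∑ b, ∑ a, lam E d j a * (P j a b * v (j + 1) b) := by
          refine Finset.sum_congr rfl fun b _ => ?_
          rw [Finset.sum_mul]
          exact Finset.sum_congr rfl fun a _ => by ring
      _ = ∑ a, ∑ b, lam E d j a * (P j a b * v (j + 1) b) := Finset.sum_comm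
      _ = ∑ a, lam E d j a * ((P j).mulVec (v (j + 1)) a) := by
          refine Finset.sum_congr rfl fun a _ => ?_
          simp [Matrix.mulVec, dotProduct, Finset.mul_sum]
      _ = ∑ a, lam E d j a * v j a := by rw [hPv]
  have hFk : Fk E d k π P
      = -∑ j ∈ Finset.range k,
          ((∑ a, lam E d j a * v j a) - ∑ b, lam E d (j + 1) b * v (j + 1) b) := by
    unfold Fk
    congr 1
    exact Finset.sum_congr rfl fun j hj => hterm j (Finset.mem_range.mp hj)
  rw [hFk, Finset.sum_range_sub' (fun j => ∑ a, lam E d j a * v j a) k]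
  have hv0 : (∑ a, lam E d 0 a * v 0 a) = 0 := by simp [lam]
  have hvk : v k = π := by
    rw [hv]
    simp only
    rw [matListProd, Nat.sub_self]
    simp [Matrix.one_mulVec]
  rw [hv0, hvk]
  ring

end Aux14

/-- `(1 − d^{−k})·α ≤ λ^{(k)}_a ≤ (1 − d^{−k})·β`; equivalently, for every
probability vector `π`, `F_k(π,P*) = (λ^{(k)})^T π ∈ [(1 − d^{−k})α, (1 − d^{−k})β]`. -/
theorem stmt14 {A : Type*} [Fintype A] [DecidableEq A] [Nonempty A] (E : Matrix A A ℝ)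
    (hE : AssumptionA E) (d : ℝ) (hd : 1 < d) (k : ℕ) (hk : 1 ≤ k) :
    (∀ a : A, (1 - (d ^ k)⁻¹) * alp E ≤ lam E d k a ∧
        lam E d k a ≤ (1 - (d ^ k)⁻¹) * bet E) ∧
    ∀ π : A → ℝ, IsProbVec π →
      Fk E d k π (fun i => Pstar E d i) = ∑ a, lam E d k a * π a ∧
      (1 - (d ^ k)⁻¹) * alp E ≤ Fk E d k π (fun i => Pstar E d i) ∧
      Fk E d k π (fun i => Pstar E d i) ≤ (1 - (d ^ k)⁻¹) * bet E := by
  have hbd := lam_bounds14 hE hd k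
  refine ⟨hbd, fun π hπ => ?_⟩
  have heq := Fk_eq14 hE hd k π
  have hsum1 : ∑ a, π a = 1 := hπ.2
  have hlow : (1 - (d ^ k)⁻¹) * alp E ≤ ∑ a, lam E d k a * π a := by
    calc (1 - (d ^ k)⁻¹) * alp E = ∑ a, (1 - (d ^ k)⁻¹) * alp E * π a := by
          rw [← Finset.mul_sum, hsum1, mul_one]
      _ ≤ ∑ a, lam E d k a * π a :=
          Finset.sum_le_sum fun a _ =>
            mul_le_mul_of_nonneg_right (hbd a).1 (hπ.1 a)
  have hhigh : ∑ a, lam E d k a * π a ≤ (1 - (d ^ k)⁻¹) * bet E := by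
    calc ∑ a, lam E d k a * π a
        ≤ ∑ a, (1 - (d ^ k)⁻¹) * bet E * π a :=
          Finset.sum_le_sum fun a _ =>
            mul_le_mul_of_nonneg_right (hbd a).2 (hπ.1 a)
      _ = (1 - (d ^ k)⁻¹) * bet E := by rw [← Finset.mul_sum, hsum1, mul_one]
  exact ⟨heq, by rw [heq]; exact hlow, by rw [heq]; exact hhigh⟩
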